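/- Let A be a nonempty finite alphabet and let (w_n)_{n∈ℕ} be a family of words over A whose lengths grow at most linearly, i.e., there exist constants b > 0 and n₁ ∈ ℕ such that |w_n| ≤ b·n for all n ≥ n₁. Then there exists a real constant p > 0 such that lim_{n→∞} |{w ∈ Aⁿ : w_{⌈p·log₂ n⌉} is a subword of w}| / |A|ⁿ = 1 (the quotient taken in ℝ, with ⌈·⌉ the ceiling function). -/

import Mathlib

open Filter Set

section Aux
variable {A : Type*} [Fintype A]

private lemma countLen (n : ℕ) :
    ({u : List A | u.length = n}).ncard = Fintype.card A ^ n := by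
  rw [← Nat.card_coe_set_eq]
  exact (Nat.card_congr ((Equiv.subtypeEquivRight fun _ => Iff.rfl :
      ↥{u : List A | u.length = n} ≃ List.Vector A n))).trans
    ((Nat.card_eq_fintype_card (α := List.Vector A n)).trans (card_vector n))

private lemma finLen (n : ℕ) : ({u : List A | u.length = n}).Finite :=
  List.finite_length_eq A n

private lemma ncard_prod' {α β : Type*} (s : Set α) (t : Set β) :
    (s ×ˢ t).ncard = s.ncard * t.ncard := by
  rw [← Nat.card_coe_set_eq, Nat.card_congr (Equiv.Set.prod s t), Nat.card_prod,
    Nat.card_coe_set_eq, Nat.card_coe_set_eq]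

private lemma badStep (v : List A) (s : ℕ) :
    ({u : List A | u.length = v.length + s ∧ ¬ v <:+: u}).ncard ≤
      (Fintype.card A ^ v.length - 1) * ({u : List A | u.length = s ∧ ¬ v <:+: u}).ncard := by
  set k := v.length with hk
  set S : Set (List A) := {x | x.length = k ∧ x ≠ v} with hS
  set T : Set (List A) := {u | u.length = s ∧ ¬ v <:+: u} with hT
  have hfin : (S ×ˢ T).Finite := ((finLen k).subset (fun x hx => hx.1)).prod
    ((finLen s).subset (fun x hx => hx.1))
  have hle : ({u : List A | u.length = k + s ∧ ¬ v <:+: u}).ncard ≤ (S ×ˢ T).ncard := by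
    have hmaps : ∀ u ∈ {u : List A | u.length = k + s ∧ ¬ v <:+: u},
        (u.take k, u.drop k) ∈ S ×ˢ T := by
      rintro u ⟨hlen, hinf⟩
      refine ⟨⟨?_, ?_⟩, ?_, ?_⟩
      · simp [hlen]
      · intro h
        exact hinf (h ▸ (List.take_prefix k u).isInfix)
      · simp [hlen]
      · intro h
        exact hinf (h.trans (List.drop_suffix k u).isInfix)
    have hinj : Set.InjOn (fun u : List A => (u.take k, u.drop k))
        {u : List A | u.length = k + s ∧ ¬ v <:+: u} := by
      rintro u₁ ⟨h₁, -⟩ u₂ ⟨h₂, -⟩ h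
      have h1 := congrArg Prod.fst h
      have h2 := congrArg Prod.snd h
      simp only at h1 h2
      rw [← List.take_append_drop k u₁, ← List.take_append_drop k u₂, h1, h2]
    exact Set.ncard_le_ncard_of_injOn _ hmaps hinj hfin
  refine hle.trans ?_
  rw [ncard_prod']
  apply Nat.mul_le_mul_right
  have hsub : S ⊆ {x : List A | x.length = k} \ {v} := by
    rintro x ⟨h1, h2⟩; exact ⟨h1, h2⟩
  calc S.ncard ≤ ({x : List A | x.length = k} \ {v}).ncard :=
        Set.ncard_le_ncard hsub ((finLen k).diff)
    _ = Fintype.card A ^ k - 1 := by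
        rw [Set.ncard_diff_singleton_of_mem (by exact hk.symm), countLen]

private lemma badPow (v : List A) (m r : ℕ) :
    ({u : List A | u.length = m * v.length + r ∧ ¬ v <:+: u}).ncard ≤
      (Fintype.card A ^ v.length - 1) ^ m * Fintype.card A ^ r := by
  induction m with
  | zero =>
      simpa using (Set.ncard_le_ncard (fun u hu => hu.1) (finLen r)).trans (countLen r).le
  | succ m ih =>
      have h1 : (m + 1) * v.length + r = v.length + (m * v.length + r) := by ring
      calc ({u : List A | u.length = (m + 1) * v.length + r ∧ ¬ v <:+: u}).ncard
          = ({u : List A | u.length = v.length + (m * v.length + r) ∧ ¬ v <:+: u}).ncard := by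
            rw [h1]
        _ ≤ (Fintype.card A ^ v.length - 1) *
              ({u : List A | u.length = m * v.length + r ∧ ¬ v <:+: u}).ncard :=
            badStep v _
        _ ≤ (Fintype.card A ^ v.length - 1) *
              ((Fintype.card A ^ v.length - 1) ^ m * Fintype.card A ^ r) :=
            Nat.mul_le_mul_left _ ih
        _ = (Fintype.card A ^ v.length - 1) ^ (m + 1) * Fintype.card A ^ r := by ring

private lemma fracBound [Nonempty A] (v : List A) (n : ℕ) (hkn : max 1 v.length ≤ n) :
    (({u : List A | u.length = n ∧ ¬ v <:+: u}).ncard : ℝ) / (Fintype.card A : ℝ) ^ n ≤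
      2 * ((max 1 v.length : ℕ) : ℝ) * (Fintype.card A : ℝ) ^ (max 1 v.length : ℕ) / n := by
  set q := Fintype.card A with hq
  have hq1 : 1 ≤ q := Fintype.card_pos
  have hqR : (1 : ℝ) ≤ (q : ℝ) := by exact_mod_cast hq1
  set k : ℕ := max 1 v.length with hkdef
  have hk0 : 0 < k := lt_of_lt_of_le one_pos (le_max_left _ _)
  have hn0 : 0 < n := lt_of_lt_of_le hk0 hkn
  have hnR : (0 : ℝ) < (n : ℝ) := by exact_mod_cast hn0
  rcases Nat.eq_zero_or_pos v.length with hv0 | hv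
  · -- v is nil: bad set is empty
    have : {u : List A | u.length = n ∧ ¬ v <:+: u} = ∅ := by
      ext u
      simp only [mem_setOf_eq, mem_empty_iff_false, iff_false, not_and, not_not]
      intro _
      rw [List.length_eq_zero_iff.mp hv0]
      exact List.nil_infix
    rw [this]
    simp only [Set.ncard_empty, Nat.cast_zero, zero_div]
    positivity
  · have hkv : k = v.length := max_eq_right hv
    set m := n / k with hm
    set r := n % k with hr
    have hmr : m * k + r = n := by
      rw [hm, hr, Nat.mul_comm]
      exact Nat.div_add_mod n k
    have hm1 : 1 ≤ m := (Nat.one_le_div_iff hk0).mpr hkn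
    have hmR : (0 : ℝ) < (m : ℝ) := by exact_mod_cast hm1
    have hbad : ({u : List A | u.length = n ∧ ¬ v <:+: u}).ncard ≤
        (q ^ k - 1) ^ m * q ^ r := by
      rw [← hmr, hkv]
      exact badPow v m r
    set Qk : ℝ := (q : ℝ) ^ k with hQk
    have hQk1 : (1 : ℝ) ≤ Qk := one_le_pow₀ hqR
    have hQk0 : (0 : ℝ) < Qk := lt_of_lt_of_le one_pos hQk1
    have hcast : (((q ^ k - 1) ^ m * q ^ r : ℕ) : ℝ) = (Qk - 1) ^ m * (q : ℝ) ^ r := by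
      have h1 : 1 ≤ q ^ k := Nat.one_le_pow _ _ hq1
      push_cast [h1]
      ring
    have hqr0 : (0 : ℝ) < (q : ℝ) ^ r := by positivity
    have hqn : ((q : ℝ)) ^ n = Qk ^ m * (q : ℝ) ^ r := by
      have hmr' : k * m + r = n := by rw [Nat.mul_comm]; exact hmr
      rw [hQk, ← pow_mul, ← pow_add, hmr']
    have hbadR : (({u : List A | u.length = n ∧ ¬ v <:+: u}).ncard : ℝ) ≤
        (Qk - 1) ^ m * (q : ℝ) ^ r := by
      rw [← hcast]; exact_mod_cast hbad
    have step1 : (({u : List A | u.length = n ∧ ¬ v <:+: u}).ncard : ℝ) / (q : ℝ) ^ n ≤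
        ((Qk - 1) / Qk) ^ m := by
      calc (({u : List A | u.length = n ∧ ¬ v <:+: u}).ncard : ℝ) / (q : ℝ) ^ n
          ≤ ((Qk - 1) ^ m * (q : ℝ) ^ r) / ((q : ℝ)) ^ n := by gcongr
        _ = ((Qk - 1) ^ m * (q : ℝ) ^ r) / (Qk ^ m * (q : ℝ) ^ r) := by rw [hqn]
        _ = (Qk - 1) ^ m / Qk ^ m := mul_div_mul_right _ _ hqr0.ne'
        _ = ((Qk - 1) / Qk) ^ m := (div_pow _ _ _).symm
    have step2 : ((Qk - 1) / Qk) ^ m ≤ Qk / m := by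
      set y : ℝ := 1 / Qk with hy
      have hy0 : 0 < y := by positivity
      have hy1 : y ≤ 1 := by
        rw [hy, div_le_one hQk0]; exact hQk1
      have hxy : (Qk - 1) / Qk = 1 - y := by
        rw [hy]; field_simp
      have hgeo : (1 - y) ^ m * (1 + y) ^ m ≤ 1 := by
        rw [← mul_pow]
        have h : (1 - y) * (1 + y) = 1 - y ^ 2 := by ring
        rw [h]
        exact pow_le_one₀ (by nlinarith) (by nlinarith)
      have hbern : 1 + (m : ℝ) * y ≤ (1 + y) ^ m := one_add_mul_le_pow (by linarith) m
      have hmy : 0 < (m : ℝ) * y := by positivity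
      have h1y : (0 : ℝ) < (1 + y) ^ m := by positivity
      have hkey : (1 - y) ^ m ≤ 1 / ((1 : ℝ) + y) ^ m := by
        rw [le_div_iff₀ h1y]; exact hgeo
      calc ((Qk - 1) / Qk) ^ m = (1 - y) ^ m := by rw [hxy]
        _ ≤ 1 / ((1 : ℝ) + y) ^ m := hkey
        _ ≤ 1 / ((m : ℝ) * y) := by
            apply one_div_le_one_div_of_le hmy; linarith
        _ = Qk / m := by rw [hy]; field_simp
    have step3 : Qk / m ≤ 2 * (k : ℝ) * Qk / n := by
      have h1 : r < k := Nat.mod_lt n hk0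
      have h2 : k ≤ m * k := Nat.le_mul_of_pos_left k hm1
      have h2km : n ≤ 2 * m * k := by
        calc n = m * k + r := hmr.symm
          _ ≤ m * k + k := Nat.add_le_add_left h1.le _
          _ ≤ m * k + m * k := Nat.add_le_add_left h2 _
          _ = 2 * m * k := by ring
      have hnle : (n : ℝ) ≤ 2 * m * k := by exact_mod_cast h2km
      rw [div_le_div_iff₀ hmR hnR]
      nlinarith [mul_le_mul_of_nonneg_left hnle hQk0.le]
    calc (({u : List A | u.length = n ∧ ¬ v <:+: u}).ncard : ℝ) / (q : ℝ) ^ n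
        ≤ ((Qk - 1) / Qk) ^ m := step1
      _ ≤ Qk / m := step2
      _ ≤ 2 * (k : ℝ) * Qk / n := step3
end Aux





open Filter

/-- **Parameterized infinite monkey theorem for words** (Proposition 3.1).
If the lengths of the words `w n` grow at most linearly, then there is a constant
`p > 0` such that the fraction of words of length `n` over the alphabet `A` that
contain `w ⌈p · log₂ n⌉` as a (contiguous) subword tends to `1`. -/
theorem parameterized_infinite_monkey_words
    {A : Type*} [Fintype A] [Nonempty A] (w : ℕ → List A)
    (b : ℝ) (hb : 0 < b) (n₁ : ℕ)
    (hlin : ∀ n : ℕ, n₁ ≤ n → ((w n).length : ℝ) ≤ b * n) :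
    ∃ p : ℝ, 0 < p ∧
      Tendsto
        (fun n : ℕ =>
          (({u : List A | u.length = n ∧ w ⌈p * Real.logb 2 n⌉₊ <:+: u}.ncard : ℝ) /
            ((Fintype.card A : ℝ) ^ n)))
        atTop (nhds 1) := by
  classical
  set q := Fintype.card A with hqdef
  have hq1 : 1 ≤ q := Fintype.card_pos
  have hqR : (1 : ℝ) ≤ (q : ℝ) := by exact_mod_cast hq1
  set Q : ℕ := max 2 q with hQdef
  have hQ2 : (2 : ℝ) ≤ (Q : ℝ) := by exact_mod_cast le_max_left 2 q
  have hQ0 : (0 : ℝ) < (Q : ℝ) := by linarith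
  have hqQ : (q : ℝ) ≤ (Q : ℝ) := by exact_mod_cast le_max_right 2 q
  set c := Real.logb 2 Q with hcdef
  have hc1 : (1 : ℝ) ≤ c := by
    rw [hcdef, Real.le_logb_iff_rpow_le one_lt_two hQ0]
    rwa [Real.rpow_one]
  have hc0 : (0 : ℝ) < c := lt_of_lt_of_le one_pos hc1
  have hp : (0 : ℝ) < 1 / (2 * b * c) := by positivity
  refine ⟨1 / (2 * b * c), hp, ?_⟩
  set p : ℝ := 1 / (2 * b * c) with hpdef
  have hbp : b * p = 1 / (2 * c) := by
    rw [hpdef]; field_simp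
  set L : ℕ → ℕ := fun n => ⌈p * Real.logb 2 n⌉₊ with hLdef
  set badf : ℕ → ℝ := fun n =>
    (({u : List A | u.length = n ∧ ¬ w (L n) <:+: u}).ncard : ℝ) / (q : ℝ) ^ n with hbadf
  -- reduce to showing badf → 0
  have hqn0 : ∀ n : ℕ, (0 : ℝ) < (q : ℝ) ^ n := fun n => by positivity
  have key : ∀ n : ℕ,
      (({u : List A | u.length = n ∧ w (L n) <:+: u}).ncard : ℝ) / (q : ℝ) ^ n
        = 1 - badf n := by
    intro n
    have hsubb : {u : List A | u.length = n ∧ ¬ w (L n) <:+: u} ⊆ {u : List A | u.length = n} :=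
      fun u hu => hu.1
    have hdiff : {u : List A | u.length = n ∧ w (L n) <:+: u} =
        {u : List A | u.length = n} \ {u : List A | u.length = n ∧ ¬ w (L n) <:+: u} := by
      ext u
      simp only [mem_setOf_eq, mem_diff, not_and, not_not]
      tauto
    have hble : ({u : List A | u.length = n ∧ ¬ w (L n) <:+: u}).ncard ≤ q ^ n := by
      rw [← countLen n]
      exact Set.ncard_le_ncard hsubb (finLen n)
    rw [hdiff, Set.ncard_diff hsubb ((finLen n).subset hsubb), countLen,
      Nat.cast_sub hble, sub_div, Nat.cast_pow, div_self (hqn0 n).ne']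
  suffices hbad0 : Tendsto badf atTop (nhds 0) by
    have h1 : Tendsto (fun n => 1 - badf n) atTop (nhds 1) := by
      simpa using tendsto_const_nhds.sub hbad0
    exact h1.congr fun n => (key n).symm
  -- the analytic estimate
  set κ : ℕ → ℝ := fun n => Real.logb 2 n / (2 * c) + (b + 1) with hκdef
  have hκhalf : Tendsto (fun n : ℕ => κ n / (n : ℝ) ^ ((1 : ℝ) / 2)) atTop (nhds 0) := by
    have hA : Tendsto (fun x : ℝ => Real.log x / x ^ ((1 : ℝ) / 2)) atTop (nhds 0) :=
      (isLittleO_log_rpow_atTop (by norm_num)).tendsto_div_nhds_zero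
    have hB : Tendsto (fun x : ℝ => (x ^ ((1 : ℝ) / 2))⁻¹) atTop (nhds 0) := by
      refine (tendsto_rpow_neg_atTop (by norm_num : (0:ℝ) < 1/2)).congr' ?_
      filter_upwards [eventually_ge_atTop (0 : ℝ)] with x hx
      rw [Real.rpow_neg hx]
    have hsum := (((hA.comp tendsto_natCast_atTop_atTop).const_mul
        ((Real.log 2)⁻¹ * (2 * c)⁻¹)).add
      ((hB.comp tendsto_natCast_atTop_atTop).const_mul (b + 1)))
    simp only [mul_zero, add_zero] at hsum
    refine hsum.congr fun n => ?_
    simp only [Function.comp_apply, hκdef, Real.logb]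
    ring
  have hn1 : ∀ᶠ n : ℕ in atTop, 1 ≤ n := eventually_ge_atTop 1
  have hL1 : ∀ᶠ n : ℕ in atTop, n₁ ≤ L n := by
    have hlogto : Tendsto (fun n : ℕ => p * Real.logb 2 n) atTop atTop :=
      ((Real.tendsto_logb_atTop one_lt_two).comp tendsto_natCast_atTop_atTop).const_mul_atTop hp
    filter_upwards [hlogto.eventually_ge_atTop (n₁ : ℝ)] with n hn
    have := hn.trans (Nat.le_ceil _)
    exact_mod_cast this
  have hKκ : ∀ᶠ n : ℕ in atTop, ((max 1 (w (L n)).length : ℕ) : ℝ) ≤ κ n := by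
    filter_upwards [hn1, hL1] with n h1 hL1n
    have hnR : (1 : ℝ) ≤ (n : ℝ) := by exact_mod_cast h1
    have hlb : 0 ≤ Real.logb 2 n := Real.logb_nonneg one_lt_two hnR
    have h2 : ((w (L n)).length : ℝ) ≤ b * L n := hlin _ hL1n
    have h3 : (L n : ℝ) ≤ p * Real.logb 2 n + 1 :=
      (Nat.ceil_lt_add_one (by positivity)).le
    have h4 : b * (p * Real.logb 2 n) = Real.logb 2 n / (2 * c) := by
      rw [← mul_assoc, hbp]; ring
    have h5 : ((w (L n)).length : ℝ) ≤ Real.logb 2 n / (2 * c) + b := by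
      calc ((w (L n)).length : ℝ) ≤ b * L n := h2
        _ ≤ b * (p * Real.logb 2 n + 1) := by
            apply mul_le_mul_of_nonneg_left h3 hb.le
        _ = Real.logb 2 n / (2 * c) + b := by rw [mul_add, h4, mul_one]
    have h6 : 0 ≤ Real.logb 2 n / (2 * c) := by positivity
    rw [Nat.cast_max]
    apply max_le
    · simp only [Nat.cast_one, hκdef]; linarith
    · simp only [hκdef]; linarith
  have hκn : ∀ᶠ n : ℕ in atTop, κ n ≤ (n : ℝ) ^ ((1 : ℝ) / 2) := by
    filter_upwards [hκhalf.eventually_lt_const one_pos, hn1] with n h h1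
    have hs : (0 : ℝ) < (n : ℝ) ^ ((1 : ℝ) / 2) :=
      Real.rpow_pos_of_pos (by exact_mod_cast h1) _
    calc κ n = κ n / (n : ℝ) ^ ((1 : ℝ) / 2) * (n : ℝ) ^ ((1 : ℝ) / 2) := by
          field_simp
      _ ≤ 1 * (n : ℝ) ^ ((1 : ℝ) / 2) := by
          apply mul_le_mul_of_nonneg_right h.le hs.le
      _ = (n : ℝ) ^ ((1 : ℝ) / 2) := one_mul _
  have hKn : ∀ᶠ n : ℕ in atTop, max 1 (w (L n)).length ≤ n := by
    filter_upwards [hKκ, hκn, hn1] with n h1 h2 h3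
    have hnR : (1 : ℝ) ≤ (n : ℝ) := by exact_mod_cast h3
    have h4 : (n : ℝ) ^ ((1 : ℝ) / 2) ≤ (n : ℝ) := by
      calc (n : ℝ) ^ ((1 : ℝ) / 2) ≤ (n : ℝ) ^ (1 : ℝ) :=
            Real.rpow_le_rpow_of_exponent_le hnR (by norm_num)
        _ = (n : ℝ) := Real.rpow_one _
    have : ((max 1 (w (L n)).length : ℕ) : ℝ) ≤ (n : ℝ) := (h1.trans h2).trans h4
    exact_mod_cast this
  -- the final squeeze
  apply squeeze_zero' (g := fun n => 2 * (Q : ℝ) ^ (b + 1) * (κ n / (n : ℝ) ^ ((1 : ℝ) / 2)))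
  · filter_upwards with n
    rw [hbadf]
    positivity
  · filter_upwards [hKκ, hKn, hn1, hL1] with n hKκn hKnn h1 hL1n
    set v := w (L n) with hv
    set K : ℕ := max 1 v.length with hK
    have hnR : (1 : ℝ) ≤ (n : ℝ) := by exact_mod_cast h1
    have hn0 : (0 : ℝ) < (n : ℝ) := by linarith
    have hlb : 0 ≤ Real.logb 2 n := Real.logb_nonneg one_lt_two hnR
    have hsn : (0 : ℝ) < (n : ℝ) ^ ((1 : ℝ) / 2) := Real.rpow_pos_of_pos hn0 _
    have hstep1 := fracBound v n hKnn
    have hQc : (2 : ℝ) ^ c = (Q : ℝ) := Real.rpow_logb two_pos (by norm_num) hQ0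
    have hpow : (q : ℝ) ^ K ≤ (Q : ℝ) ^ (b + 1) * (n : ℝ) ^ ((1 : ℝ) / 2) := by
      calc (q : ℝ) ^ K ≤ (Q : ℝ) ^ K := by
            apply pow_le_pow_left₀ (by positivity) hqQ
        _ = (Q : ℝ) ^ ((K : ℕ) : ℝ) := (Real.rpow_natCast _ _).symm
        _ ≤ (Q : ℝ) ^ (κ n) := by
            apply Real.rpow_le_rpow_of_exponent_le (by linarith) hKκn
        _ = (Q : ℝ) ^ (Real.logb 2 n / (2 * c)) * (Q : ℝ) ^ (b + 1) := by
            rw [← Real.rpow_add hQ0, hκdef]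
        _ = (n : ℝ) ^ ((1 : ℝ) / 2) * (Q : ℝ) ^ (b + 1) := by
            congr 1
            rw [← hQc, ← Real.rpow_mul two_pos.le]
            · rw [show c * (Real.logb 2 n / (2 * c)) = Real.logb 2 n * (1 / 2) by
                field_simp]
              rw [Real.rpow_mul two_pos.le, Real.rpow_logb two_pos (by norm_num) hn0]
        _ = (Q : ℝ) ^ (b + 1) * (n : ℝ) ^ ((1 : ℝ) / 2) := mul_comm _ _
    have hKR : ((K : ℕ) : ℝ) ≤ κ n := hKκn
    have hK0 : (0 : ℝ) ≤ ((K : ℕ) : ℝ) := by positivity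
    have hκ0 : 0 ≤ κ n := hK0.trans hKR
    calc badf n ≤ 2 * ((K : ℕ) : ℝ) * (q : ℝ) ^ K / n := hstep1
      _ ≤ 2 * κ n * ((Q : ℝ) ^ (b + 1) * (n : ℝ) ^ ((1 : ℝ) / 2)) / n := by
          gcongr
      _ = 2 * (Q : ℝ) ^ (b + 1) * (κ n / (n : ℝ) ^ ((1 : ℝ) / 2)) := by
          have hnn : (n : ℝ) = (n : ℝ) ^ ((1 : ℝ) / 2) * (n : ℝ) ^ ((1 : ℝ) / 2) := by
            rw [← Real.rpow_add hn0]
            norm_num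
          rw [show 2 * (Q : ℝ) ^ (b + 1) * (κ n / (n : ℝ) ^ ((1 : ℝ) / 2)) =
              (2 * (Q : ℝ) ^ (b + 1) * κ n) / (n : ℝ) ^ ((1 : ℝ) / 2) from by ring,
            div_eq_div_iff hn0.ne' hsn.ne']
          linear_combination (-(2 * (Q : ℝ) ^ (b + 1) * κ n)) * hnn
  · have := hκhalf.const_mul (2 * (Q : ℝ) ^ (b + 1))
    simpa using this
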